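/- Let M be an n×n Boolean matrix and u, v Boolean n-vectors. In the weighted bipartite graph G_{uMv} with nodes s, t, a_1,...,a_n, b_1,...,b_n, edge weights w(a_i,b_j) = 3 − 2·M[i,j], w(s,a_i) = 3 − 2·u[i], w(b_j,t) = 3 − 2·v[j], if uᵀMv = 0 (i.e., for all i, j, u[i]·M[i,j]·v[j] = 0), then every (s,t)-path has total weight at least 5. -/

import Mathlib

/-- Vertices of the graph `G_{uMv}`: a source `s`, a sink `t`,
and two sides `a_1,…,a_n` and `b_1,…,b_n`. -/
inductive Vtx (n : ℕ) where
  | s : Vtx n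
  | t : Vtx n
  | a : Fin n → Vtx n
  | b : Fin n → Vtx n
deriving DecidableEq

/-- Adjacency of `G_{uMv}`: edges between `s` and every `a i`,
between every `a i` and every `b j`, and between every `b j` and `t`. -/
inductive GAdj (n : ℕ) : Vtx n → Vtx n → Prop where
  | sa (i : Fin n) : GAdj n Vtx.s (Vtx.a i)
  | as (i : Fin n) : GAdj n (Vtx.a i) Vtx.s
  | ab (i j : Fin n) : GAdj n (Vtx.a i) (Vtx.b j)
  | ba (i j : Fin n) : GAdj n (Vtx.b j) (Vtx.a i)
  | bt (j : Fin n) : GAdj n (Vtx.b j) Vtx.t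
  | tb (j : Fin n) : GAdj n Vtx.t (Vtx.b j)

/-- Edge weights of `G_{uMv}`: `w(s,aᵢ) = 3 − 2·u[i]`, `w(aᵢ,bⱼ) = 3 − 2·M[i,j]`,
`w(bⱼ,t) = 3 − 2·v[j]`. -/
def gW {n : ℕ} (M : Fin n → Fin n → Bool) (u v : Fin n → Bool) :
    Vtx n → Vtx n → ℕ
  | Vtx.s, Vtx.a i => 3 - 2 * (if u i then 1 else 0)
  | Vtx.a i, Vtx.s => 3 - 2 * (if u i then 1 else 0)
  | Vtx.a i, Vtx.b j => 3 - 2 * (if M i j then 1 else 0)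
  | Vtx.b j, Vtx.a i => 3 - 2 * (if M i j then 1 else 0)
  | Vtx.b j, Vtx.t => 3 - 2 * (if v j then 1 else 0)
  | Vtx.t, Vtx.b j => 3 - 2 * (if v j then 1 else 0)
  | _, _ => 0

/-- The weight of a walk, given as the list of visited vertices:
the sum of the weights of its consecutive edges. -/
def walkWeight {n : ℕ} (w : Vtx n → Vtx n → ℕ) (p : List (Vtx n)) : ℕ :=
  ((p.zip p.tail).map fun q => w q.1 q.2).sum

lemma gW_pos {n : ℕ} (M : Fin n → Fin n → Bool) (u v : Fin n → Bool)
    {x y : Vtx n} (h : GAdj n x y) : 1 ≤ gW M u v x y := by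
  cases h <;> simp [gW] <;> split <;> omega

lemma walkWeight_cons {n : ℕ} (w : Vtx n → Vtx n → ℕ) (x y : Vtx n) (l : List (Vtx n)) :
    walkWeight w (x :: y :: l) = w x y + walkWeight w (y :: l) := by
  simp [walkWeight]

lemma walkWeight_ge {n : ℕ} (M : Fin n → Fin n → Bool) (u v : Fin n → Bool) :
    ∀ p : List (Vtx n), List.Chain' (GAdj n) p →
      p.length - 1 ≤ walkWeight (gW M u v) p
  | [], _ => by simp [walkWeight]
  | [x], _ => by simp [walkWeight]
  | x :: y :: l, hc => by
    rw [walkWeight_cons]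
    simp only [List.Chain', List.isChain_cons_cons] at hc
    have h1 := gW_pos M u v hc.1
    have h2 := walkWeight_ge M u v (y :: l) hc.2
    simp only [List.length_cons] at *
    omega

/-- If `uᵀMv = 0`, i.e. `u[i]·M[i,j]·v[j] = 0` for all `i, j`,
then every `(s,t)`-path in `G_{uMv}` has total weight at least `5`. -/
theorem stmt1 (n : ℕ) (M : Fin n → Fin n → Bool) (u v : Fin n → Bool)
    (h : ∀ i j, ¬(u i = true ∧ M i j = true ∧ v j = true)) :
    ∀ p : List (Vtx n), p.head? = some Vtx.s → p.getLast? = some Vtx.t →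
      List.Chain' (GAdj n) p → p.Nodup → 5 ≤ walkWeight (gW M u v) p := by
  intro p hh hl hc hn
  rcases p with _|⟨x, _|⟨y, _|⟨z, _|⟨w, _|⟨r, _|⟨q, rest⟩⟩⟩⟩⟩⟩
  · cases hh
  · simp at hh hl; subst hh; simp_all
  · simp [List.Chain', List.isChain_cons_cons] at hh hl hc; subst hh; cases hc <;> simp_all
  · -- [x, y, z]
    simp [List.Chain', List.isChain_cons_cons] at hh hl hc
    subst hh
    obtain ⟨h1, h2⟩ := hc
    cases h1
    cases h2 <;> simp_all
  · -- [x, y, z, w] : the main case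
    simp [List.Chain', List.isChain_cons_cons] at hh hl hc hn
    subst hh
    obtain ⟨h1, h2, h3⟩ := hc
    cases h1 with
    | sa i =>
      cases h2 with
      | as => simp_all
      | ab i j =>
        cases h3 with
        | ba => simp_all
        | bt =>
          simp only [walkWeight_cons, walkWeight, List.zip_nil_right] at *
          simp only [gW, List.map_nil, List.sum_nil, add_zero]
          have := h i j
          by_cases hu : u i <;> by_cases hm : M i j <;> by_cases hv : v j <;>
            simp_all <;> omega
  · -- [x, y, z, w, r] : impossible
    simp [List.Chain', List.isChain_cons_cons] at hh hl hc hn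
    subst hh
    obtain ⟨h1, h2, h3, h4⟩ := hc
    cases h1
    cases h2 with
    | as => simp_all
    | ab i j =>
      cases h3 with
      | ba => cases h4 <;> simp_all
      | bt => cases h4 <;> simp_all
  · -- length ≥ 6
    have := walkWeight_ge M u v _ hc
    simp only [List.length_cons] at this
    omega
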